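/- arXiv:0906.0696 — 2 statements merged into one kernel-verified Lean document; each statement's English description precedes it below -/
import Mathlib

section
/- (Touchard's congruence, generalized) For every prime p and positive integers n and m, B_{n+p^m} \equiv m * B_n + B_{n+1} (mod p). -/
/-- Stirling numbers of the second kind. -/
def stirling : ℕ → ℕ → ℕ
  | 0, 0 => 1
  | 0, _ + 1 => 0
  | _ + 1, 0 => 0
  | n + 1, k + 1 => stirling n k + (k + 1) * stirling n (k + 1)

/-- The `n`-th Bell number. -/
def bell (n : ℕ) : ℕ := ∑ k ∈ Finset.range (n + 1), stirling n k

open Polynomial Finset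

lemma stirling_zero_right : ∀ n, stirling (n+1) 0 = 0 := fun _ => rfl

lemma stirling_eq_zero_of_lt : ∀ {n k}, n < k → stirling n k = 0 := by
  intro n
  induction n with
  | zero => intro k hk; match k, hk with | k+1, _ => rfl
  | succ n ih =>
    intro k hk
    match k, hk with
    | k+1, hk =>
      show stirling n k + (k+1)*stirling n (k+1) = 0
      rw [ih (by omega), ih (by omega)]; ring

lemma stirling_succ (n k : ℕ) :
    stirling (n+1) (k+1) = stirling n k + (k + 1) * stirling n (k + 1) := rfl

noncomputable def ff (p k : ℕ) : Polynomial (ZMod p) :=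
  ∏ i ∈ Finset.range k, (X - C (i : ZMod p))

lemma ff_monic (p k : ℕ) [Fact p.Prime] : (ff p k).Monic :=
  monic_prod_of_monic _ _ fun i _ => monic_X_sub_C _

lemma ff_natDegree (p k : ℕ) [Fact p.Prime] : (ff p k).natDegree = k := by
  rw [ff, natDegree_prod]
  · simp only [natDegree_X_sub_C, sum_const, card_range, smul_eq_mul, mul_one]
  · intro i _; exact X_sub_C_ne_zero _

lemma X_mul_ff (p k : ℕ) [Fact p.Prime] :
    X * ff p k = ff p (k+1) + C (k : ZMod p) * ff p k := by
  simp only [ff, prod_range_succ]; ring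

lemma sum_stirling_ff (p : ℕ) [Fact p.Prime] (n : ℕ) :
    ∑ k ∈ range (n+1), C ((stirling n k : ZMod p)) * ff p k = X ^ n := by
  induction n with
  | zero =>
    rw [Finset.sum_range_one]
    simp [ff, show stirling 0 0 = 1 from rfl]
  | succ n ih =>
    have key : (X:Polynomial (ZMod p)) ^ (n+1)
        = ∑ k ∈ range (n+1), (C ((stirling n k : ZMod p)) * ff p (k+1)
            + C ((k:ZMod p)) * C ((stirling n k : ZMod p)) * ff p k) := by
      rw [pow_succ, mul_comm, ← ih, mul_sum]
      refine sum_congr rfl fun k _ => ?_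
      rw [mul_left_comm, X_mul_ff]
      ring
    rw [key, sum_add_distrib, Finset.sum_range_succ']
    have h0 : C ((stirling (n+1) 0 : ZMod p)) * ff p 0 = 0 := by
      simp [show stirling (n+1) 0 = 0 from rfl]
    rw [h0, add_zero]
    have h1 : ∀ k ∈ range (n+1),
        C ((stirling (n+1) (k+1) : ZMod p)) * ff p (k+1)
        = C ((stirling n k : ZMod p)) * ff p (k+1)
          + C (((k:ZMod p))+1) * C ((stirling n (k+1) : ZMod p)) * ff p (k+1) := by
      intro k _
      rw [stirling_succ]
      simp only [Nat.cast_add, Nat.cast_mul, Nat.cast_one, C_add, C_mul]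
      ring
    rw [sum_congr rfl h1, sum_add_distrib]
    congr 1
    -- ∑_{k∈range(n+1)} C(k+1) * C S(n,k+1) * ff(k+1) = ∑_{k∈range(n+1)} C k * C S(n,k) * ff k
    rw [Finset.sum_range_succ' (fun k => C ((k:ZMod p)) * C ((stirling n k : ZMod p)) * ff p k) n]
    have h2 : C ((0:ℕ) : ZMod p) * C ((stirling n 0 : ZMod p)) * ff p 0 = 0 := by simp
    rw [h2, add_zero, Finset.sum_range_succ]
    have h3 : C (((n:ZMod p))+1) * C ((stirling n (n+1) : ZMod p)) * ff p (n+1) = 0 := by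
      rw [stirling_eq_zero_of_lt (Nat.lt_succ_self n)]
      simp
    rw [h3, add_zero]
    refine sum_congr rfl fun k _ => ?_
    push_cast
    ring

lemma ff_self (p : ℕ) [hp : Fact p.Prime] : ff p p = X ^ p - X := by
  have hcard : Fintype.card (ZMod p) = p := ZMod.card p
  have hq : (X ^ p - X : (ZMod p)[X]).roots = Finset.univ.val := by
    have := FiniteField.roots_X_pow_card_sub_X (ZMod p)
    rwa [hcard] at this
  have h1p : 1 < p := hp.out.one_lt
  have hmonic : (X ^ p - X : (ZMod p)[X]).Monic := by
    apply monic_X_pow_sub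
    rw [degree_X]; exact_mod_cast h1p
  have hdeg : (X ^ p - X : (ZMod p)[X]).natDegree = p :=
    FiniteField.X_pow_card_sub_X_natDegree_eq (ZMod p) h1p
  have hcards : Multiset.card (X ^ p - X : (ZMod p)[X]).roots
      = (X ^ p - X : (ZMod p)[X]).natDegree := by
    rw [hq, hdeg]; simpa using hcard
  have hsplit := prod_multiset_X_sub_C_of_monic_of_roots_card_eq hmonic hcards
  rw [hq] at hsplit
  have huniv : (Finset.univ.val.map fun a : ZMod p => X - C a).prod
      = ∏ a : ZMod p, (X - C a) := rfl
  rw [huniv] at hsplit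
  rw [← hsplit, ff]
  refine Finset.prod_nbij' (fun i => (i : ZMod p)) (fun a => a.val) ?_ ?_ ?_ ?_ ?_
  · intro i _; exact Finset.mem_univ _
  · intro a _
    simp [ZMod.val_lt a]
  · intro i hi
    simp only [Finset.mem_range] at hi
    exact ZMod.val_cast_of_lt hi
  · intro a _
    simp [ZMod.natCast_val, ZMod.cast_id]
  · intro i _
    rfl


lemma ff_add_p (p k : ℕ) [Fact p.Prime] : ff p (k + p) = ff p p * ff p k := by
  rw [ff, Nat.add_comm k p, Finset.prod_range_add, ← ff]
  congr 1
  rw [ff]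
  refine Finset.prod_congr rfl fun j _ => ?_
  congr 1
  push_cast [ZMod.natCast_self]
  ring

lemma ff_extract (p : ℕ) [Fact p.Prime] (N : ℕ) (a : ℕ → ZMod p)
    (h : ∑ k ∈ range N, C (a k) * ff p k = 0) : ∀ k < N, a k = 0 := by
  induction N with
  | zero => intro k hk; omega
  | succ N ih =>
    have hN : a N = 0 := by
      have hc := congrArg (fun q => Polynomial.coeff q N) h
      simp only [finset_sum_coeff, coeff_zero] at hc
      rw [Finset.sum_range_succ] at hc
      have hz : ∀ k ∈ range N, (C (a k) * ff p k).coeff N = 0 := by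
        intro k hk
        simp only [Finset.mem_range] at hk
        rw [coeff_C_mul, coeff_eq_zero_of_natDegree_lt (by rw [ff_natDegree]; exact hk),
          mul_zero]
      rw [Finset.sum_eq_zero hz, zero_add, coeff_C_mul] at hc
      have : (ff p N).coeff N = 1 := by
        have := (ff_monic p N).leadingCoeff
        rwa [leadingCoeff, ff_natDegree] at this
      rwa [this, mul_one] at hc
    intro k hk
    rcases Nat.lt_succ_iff_lt_or_eq.mp hk with h' | rfl
    · rw [Finset.sum_range_succ, hN, map_zero, zero_mul, add_zero] at h
      exact ih h _ h'
    · exact hN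

lemma stirling_touchard (p : ℕ) [hp : Fact p.Prime] (n k : ℕ) :
    (stirling (n+p) k : ZMod p)
      = (stirling (n+1) k : ZMod p)
        + (if p ≤ k then (stirling n (k-p) : ZMod p) else 0) := by
  have hp1 : 1 ≤ p := hp.out.one_lt.le
  set a : ℕ → ZMod p := fun k =>
    (stirling (n+p) k : ZMod p) - (stirling (n+1) k : ZMod p)
      - (if p ≤ k then (stirling n (k-p) : ZMod p) else 0) with ha
  have h1 : ∑ j ∈ range (n+p+1), C ((stirling (n+p) j : ZMod p)) * ff p j
      = X ^ (n+p) := sum_stirling_ff p (n+p)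
  have h2 : ∑ j ∈ range (n+p+1), C ((stirling (n+1) j : ZMod p)) * ff p j
      = X ^ (n+1) := by
    rw [← sum_stirling_ff p (n+1)]
    symm
    apply Finset.sum_subset
    · apply Finset.range_subset_range.mpr; omega
    · intro j _ hj
      simp only [Finset.mem_range, not_lt] at hj
      rw [stirling_eq_zero_of_lt (by omega)]
      simp
  have h3 : ∑ j ∈ range (n+p+1),
        C ((if p ≤ j then (stirling n (j-p) : ZMod p) else 0)) * ff p j
      = ff p p * X ^ n := by
    have hrw : n + p + 1 = p + (n + 1) := by omega
    rw [hrw, Finset.sum_range_add]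
    have hz : ∀ j ∈ range p,
        C ((if p ≤ j then (stirling n (j-p) : ZMod p) else 0)) * ff p j = 0 := by
      intro j hj
      simp only [Finset.mem_range] at hj
      rw [if_neg (by omega)]
      simp
    rw [Finset.sum_eq_zero hz, zero_add]
    rw [← sum_stirling_ff p n, Finset.mul_sum]
    refine Finset.sum_congr rfl fun j _ => ?_
    rw [if_pos (by omega), Nat.add_sub_cancel_left, show p + j = j + p by omega, ff_add_p]
    ring
  have hsum : ∑ j ∈ range (n+p+1), C (a j) * ff p j = 0 := by
    have : ∀ j ∈ range (n+p+1), C (a j) * ff p j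
        = C ((stirling (n+p) j : ZMod p)) * ff p j
          - C ((stirling (n+1) j : ZMod p)) * ff p j
          - C ((if p ≤ j then (stirling n (j-p) : ZMod p) else 0)) * ff p j := by
      intro j _
      rw [ha]
      simp only [map_sub]
      ring
    rw [Finset.sum_congr rfl this, Finset.sum_sub_distrib, Finset.sum_sub_distrib,
      h1, h2, h3, ff_self, pow_add]
    ring
  by_cases hk : k < n + p + 1
  · have := ff_extract p (n+p+1) a hsum k hk
    rw [ha] at this
    linear_combination this
  · push_neg at hk
    rw [stirling_eq_zero_of_lt (by omega), stirling_eq_zero_of_lt (by omega)]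
    have : (if p ≤ k then (stirling n (k-p) : ZMod p) else 0) = 0 := by
      split
      · rw [stirling_eq_zero_of_lt (by omega)]; simp
      · rfl
    rw [this]
    simp

lemma bell_touchard (p : ℕ) [hp : Fact p.Prime] (n : ℕ) :
    (bell (n+p) : ZMod p) = (bell (n+1) : ZMod p) + (bell n : ZMod p) := by
  have hp1 : 1 ≤ p := hp.out.one_lt.le
  rw [bell]
  push_cast
  rw [Finset.sum_congr rfl fun k _ => stirling_touchard p n k, Finset.sum_add_distrib]
  congr 1
  · rw [bell]
    push_cast
    symm
    apply Finset.sum_subset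
    · apply Finset.range_subset_range.mpr; omega
    · intro j _ hj
      simp only [Finset.mem_range, not_lt] at hj
      rw [stirling_eq_zero_of_lt (by omega)]
      simp
  · have hrw : n + p + 1 = p + (n + 1) := by omega
    rw [hrw, Finset.sum_range_add]
    have hz : ∀ j ∈ range p,
        (if p ≤ j then (stirling n (j-p) : ZMod p) else 0) = 0 := by
      intro j hj
      simp only [Finset.mem_range] at hj
      rw [if_neg (by omega)]
    rw [Finset.sum_eq_zero hz, zero_add, bell]
    push_cast
    refine Finset.sum_congr rfl fun j _ => ?_
    rw [if_pos (by omega), Nat.add_sub_cancel_left]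

lemma choose_step {M : Type*} [CommRing M] (q : ℕ) (f : ℕ → M) :
    ∑ j ∈ range (q+1), (q.choose j : M) * (f j + f (j+1))
      = ∑ j ∈ range (q+2), ((q+1).choose j : M) * f j := by
  rw [Finset.sum_range_succ' (fun j => ((q+1).choose j : M) * f j) (q+1)]
  have h1 : ∀ j ∈ range (q+1), ((q+1).choose (j+1) : M) * f (j+1)
      = (q.choose j : M) * f (j+1) + (q.choose (j+1) : M) * f (j+1) := by
    intro j _
    rw [Nat.choose_succ_succ]
    push_cast
    ring
  rw [Finset.sum_congr rfl h1, Finset.sum_add_distrib]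
  have h2 : ∑ j ∈ range (q+1), (q.choose (j+1) : M) * f (j+1)
        + ((q+1).choose 0 : M) * f 0
      = ∑ j ∈ range (q+1), (q.choose j : M) * f j := by
    have := Finset.sum_range_succ' (fun j => (q.choose j : M) * f j) (q+1)
    rw [Finset.sum_range_succ (fun j => (q.choose j : M) * f j) (q+1)] at this
    rw [Nat.choose_succ_self] at this
    simp only [Nat.cast_zero, zero_mul, add_zero, Nat.choose_zero_right, Nat.cast_one] at this ⊢
    linear_combination -this
  rw [add_assoc, h2]
  rw [Finset.sum_congr rfl (fun j _ => by ring :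
    ∀ j ∈ range (q+1), (q.choose j : M) * (f j + f (j+1))
      = (q.choose j : M) * f (j+1) + (q.choose j : M) * f j), Finset.sum_add_distrib]

lemma bell_mul (p : ℕ) [Fact p.Prime] (q : ℕ) : ∀ n : ℕ,
    (bell (n + p*q) : ZMod p) = ∑ j ∈ range (q+1), (q.choose j : ZMod p) * bell (n+j) := by
  induction q with
  | zero => intro n; simp
  | succ q ih =>
    intro n
    have h1 : n + p*(q+1) = (n+p) + p*q := by ring
    rw [h1, ih (n+p)]
    have h2 : ∀ j ∈ range (q+1), (q.choose j : ZMod p) * bell (n+p+j)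
        = (q.choose j : ZMod p) * ((bell (n+j) : ZMod p) + (bell (n+(j+1)) : ZMod p)) := by
      intro j _
      have : n + p + j = (n + j) + p := by ring
      rw [this, bell_touchard]
      have : n + j + 1 = n + (j+1) := by ring
      rw [this]
      ring
    rw [Finset.sum_congr rfl h2, choose_step q (fun j => (bell (n+j) : ZMod p))]

lemma bell_pow_step (p : ℕ) [hp : Fact p.Prime] (m n : ℕ) :
    (bell (n + p^(m+1)) : ZMod p) = (bell n : ZMod p) + (bell (n + p^m) : ZMod p) := by
  have h1 : p^(m+1) = p * p^m := by ring
  rw [h1, bell_mul p (p^m) n]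
  have hpm : 0 < p^m := Nat.pow_pos hp.out.pos
  rw [Finset.sum_eq_add_of_mem 0 (p^m) (by simp) (by simp) (by omega) ?_]
  · simp
  · intro j hj h0
    simp only [Finset.mem_range] at hj
    have : (p : ZMod p) = 0 := ZMod.natCast_self p
    have hdvd : p ∣ (p^m).choose j := hp.out.dvd_choose_pow h0.1 h0.2
    obtain ⟨c, hc⟩ := hdvd
    rw [hc]
    push_cast
    rw [this]
    ring

lemma main_zmod (p : ℕ) [Fact p.Prime] (n m : ℕ) (hm : 0 < m) :
    (bell (n + p^m) : ZMod p) = (m : ZMod p) * bell n + bell (n+1) := by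
  induction m with
  | zero => omega
  | succ m ih =>
    rcases Nat.eq_zero_or_pos m with rfl | hm'
    · rw [pow_one, bell_touchard]
      push_cast
      ring
    · rw [bell_pow_step, ih hm']
      push_cast
      ring

theorem touchard_general (p n m : ℕ) (hp : p.Prime) (hn : 0 < n) (hm : 0 < m) :
    bell (n + p ^ m) ≡ m * bell n + bell (n + 1) [MOD p] := by
  haveI : Fact p.Prime := ⟨hp⟩
  have h : ((bell (n + p^m) : ZMod p)) = ((m * bell n + bell (n+1) : ℕ) : ZMod p) := by
    push_cast
    exact main_zmod p n m hm
  exact (ZMod.natCast_eq_natCast_iff _ _ _).mp h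
end

section
/- (Touchard's congruence) For every prime p and positive integer n, B_{n+p} \equiv B_n + B_{n+1} (mod p). -/
open Finset

def g (n k : ℕ) : ℤ := ∑ j ∈ range (k + 1), (-1) ^ (k + j) * (k.choose j) * (j : ℤ) ^ n

lemma g_zero (k : ℕ) : g 0 k = if k = 0 then 1 else 0 := by
  have h : g 0 k = (-1) ^ k * ∑ j ∈ range (k + 1), (-1) ^ j * (k.choose j : ℤ) := by
    rw [g, mul_sum]
    refine sum_congr rfl fun j _ => ?_
    rw [pow_add]
    ring
  rw [h, Int.alternating_sum_range_choose]
  split <;> simp_all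

lemma g_succ (n k : ℕ) : g (n + 1) (k + 1) = (k + 1) * (g n (k + 1) + g n k) := by
  have sgn : ∀ j : ℕ, ((-1 : ℤ)) ^ (k + 1 + (j + 1)) = (-1) ^ (k + j) := by
    intro j
    rw [show k + 1 + (j + 1) = (k + j) + 2 from by ring, pow_add]
    norm_num
  have e1 : ∀ m : ℕ, g m (k + 1) =
      (∑ i ∈ range (k + 1), (-1) ^ (k + i) * ((k + 1).choose (i + 1)) * ((i : ℤ) + 1) ^ m)
        + (-1) ^ (k + 1) * (0 : ℤ) ^ m := by
    intro m
    rw [g, sum_range_succ']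
    congr 1
    · refine sum_congr rfl fun i _ => ?_
      rw [sgn]; push_cast; ring
    · simp
  have e2 : g n k =
      (∑ i ∈ range (k + 1), -((-1) ^ (k + i) * (k.choose (i + 1)) * ((i : ℤ) + 1) ^ n))
        + (-1) ^ k * (0 : ℤ) ^ n := by
    rw [g, sum_range_succ', sum_range_succ, Nat.choose_succ_self]
    simp only [Nat.cast_zero, mul_zero, zero_mul, neg_zero, add_zero]
    congr 1
    · refine sum_congr rfl fun i _ => ?_
      rw [show k + (i + 1) = (k + i) + 1 from by ring, pow_succ]
      push_cast; ring
    · simp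
  have key : ∀ i : ℕ, ((k:ℤ) + 1) * (((k+1).choose (i+1) : ℤ) - (k.choose (i+1) : ℤ))
      = ((k+1).choose (i+1) : ℤ) * ((i : ℤ) + 1) := by
    intro i
    have p1 : (((k+1).choose (i+1) : ℕ) : ℤ) = (k.choose i : ℤ) + (k.choose (i+1) : ℤ) := by
      exact_mod_cast congrArg (fun x : ℕ => (x : ℤ)) (Nat.choose_succ_succ k i)
    have p2 : ((k:ℤ) + 1) * (k.choose i : ℤ) = ((k+1).choose (i+1) : ℤ) * ((i:ℤ) + 1) := by
      exact_mod_cast congrArg (fun x : ℕ => (x : ℤ)) (Nat.add_one_mul_choose_eq k i)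
    linear_combination ((k:ℤ) + 1) * p1 + p2
  have tw : ∀ i ∈ range (k + 1),
      ((k:ℤ) + 1) * ((-1) ^ (k + i) * ((k + 1).choose (i + 1)) * ((i : ℤ) + 1) ^ n
        + -((-1) ^ (k + i) * (k.choose (i + 1)) * ((i : ℤ) + 1) ^ n))
      = (-1) ^ (k + i) * ((k + 1).choose (i + 1)) * ((i : ℤ) + 1) ^ (n + 1) := by
    intro i _
    have h := key i
    rw [pow_succ]
    linear_combination ((-1:ℤ)) ^ (k + i) * ((i:ℤ) + 1) ^ n * h
  have hz : ((-1:ℤ)) ^ (k + 1) * (0:ℤ) ^ n + (-1) ^ k * (0:ℤ) ^ n = 0 := by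
    rw [pow_succ]; ring
  rw [e1 (n + 1), e1 n, e2, show ((0:ℤ) ^ (n+1)) = 0 from by ring]
  rw [← sum_congr rfl tw, ← mul_sum, sum_add_distrib]
  linear_combination (-((k:ℤ) + 1)) * hz

lemma stirling_succ_succ (n k : ℕ) :
    stirling (n + 1) (k + 1) = stirling n k + (k + 1) * stirling n (k + 1) := rfl

lemma stirling_succ_zero (n : ℕ) : stirling (n + 1) 0 = 0 := rfl

lemma stirling_eq_zero : ∀ {n k : ℕ}, n < k → stirling n k = 0
  | 0, k + 1, _ => rfl
  | n + 1, k + 1, h => by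
    rw [stirling_succ_succ, stirling_eq_zero (by omega), stirling_eq_zero (by omega)]
    ring

lemma stirling_self : ∀ n : ℕ, stirling n n = 1
  | 0 => rfl
  | n + 1 => by
    rw [stirling_succ_succ, stirling_self n, stirling_eq_zero (by omega)]
    ring

lemma stirling_one (k : ℕ) : stirling 1 k = if k = 1 then 1 else 0 := by
  match k with
  | 0 => rfl
  | 1 => rfl
  | k + 2 => rw [stirling_eq_zero (by omega)]; simp

lemma factorial_stirling : ∀ n k : ℕ, (k.factorial : ℤ) * (stirling n k : ℤ) = g n k
  | 0, 0 => by simp [g_zero, stirling]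
  | 0, k + 1 => by
    rw [g_zero, show stirling 0 (k+1) = 0 from rfl]
    simp
  | n + 1, 0 => by
    rw [stirling_succ_zero]
    simp [g]
  | n + 1, k + 1 => by
    rw [g_succ, ← factorial_stirling n k, ← factorial_stirling n (k + 1), stirling_succ_succ]
    rw [Nat.factorial_succ]
    push_cast
    ring

section Prime

variable {p : ℕ} [hp : Fact p.Prime]

lemma stirling_p_cast (k : ℕ) (hk : k < p) :
    ((stirling p k : ℕ) : ZMod p) = ((stirling 1 k : ℕ) : ZMod p) := by
  have hf : ((k.factorial : ℕ) : ZMod p) ≠ 0 := by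
    rw [Ne, ZMod.natCast_eq_zero_iff]
    intro hdvd
    exact absurd ((Nat.Prime.dvd_factorial hp.out).mp hdvd) (by omega)
  have c1 := congrArg (fun x : ℤ => (x : ZMod p)) (factorial_stirling p k)
  have c2 := congrArg (fun x : ℤ => (x : ZMod p)) (factorial_stirling 1 k)
  try simp only at c1 c2
  push_cast at c1 c2
  have hg : ((g p k : ℤ) : ZMod p) = ((g 1 k : ℤ) : ZMod p) := by
    rw [g, g]
    push_cast
    refine Finset.sum_congr rfl fun j _ => ?_
    rw [ZMod.pow_card, pow_one]
  push_cast at hg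
  rw [hg] at c1
  exact mul_left_cancel₀ hf (c1.trans c2.symm)

lemma stirling_key (n k : ℕ) :
    ((stirling (n + p) k : ℕ) : ZMod p) =
      ((stirling (n + 1) k : ℕ) : ZMod p)
        + (if p ≤ k then ((stirling n (k - p) : ℕ) : ZMod p) else 0) := by
  induction n generalizing k with
  | zero =>
    rcases lt_trichotomy k p with hk | hk | hk
    · rw [if_neg (by omega), add_zero, zero_add]
      exact stirling_p_cast k hk
    · subst hk
      rw [if_pos le_rfl, zero_add, Nat.sub_self, stirling_self, stirling_self,
        stirling_eq_zero (by exact hp.out.one_lt)]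
      simp
    · rw [if_pos (by omega), zero_add, stirling_eq_zero hk,
        stirling_eq_zero (show 0 + 1 < k by have := hp.out.two_le; omega),
        stirling_eq_zero (show 0 < k - p by omega)]
      simp
  | succ n ih =>
    match k with
    | 0 =>
      rw [if_neg (by have := hp.out.pos; omega), show n + 1 + p = (n + p) + 1 from by ring,
        stirling_succ_zero, stirling_succ_zero]
      simp
    | j + 1 =>
      rw [show n + 1 + p = (n + p) + 1 from by ring, stirling_succ_succ, stirling_succ_succ]
      push_cast
      rw [ih j, ih (j + 1)]
      rcases lt_trichotomy (j + 1) p with hj | hj | hj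
      · rw [if_neg (by omega), if_neg (by omega), if_neg (by omega)]
        ring
      · rw [if_neg (by omega), if_pos (by omega), if_pos (by omega)]
        rw [show j + 1 - p = 0 from by omega]
        have hps : ((p : ℕ) : ZMod p) = 0 := ZMod.natCast_self p
        have : ((j : ZMod p) + 1) = 0 := by
          rw [← hps]; push_cast [← hj]; ring
        rw [stirling_succ_zero]
        push_cast
        rw [this]
        ring
      · rw [if_pos (by omega), if_pos (by omega), if_pos (by omega)]
        rw [show j + 1 - p = (j - p) + 1 from by omega, stirling_succ_succ n (j - p)]
        push_cast
        have hcast : (((j - p : ℕ)) : ZMod p) = (j : ZMod p) := by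
          rw [Nat.cast_sub (by omega), ZMod.natCast_self, sub_zero]
        rw [hcast]
        ring
  
end Prime

theorem touchard (p n : ℕ) (hp : p.Prime) (hn : 0 < n) :
    bell (n + p) ≡ bell n + bell (n + 1) [MOD p] := by
  haveI : Fact p.Prime := ⟨hp⟩
  rw [← ZMod.natCast_eq_natCast_iff]
  simp only [bell]
  push_cast
  rw [show n + p + 1 = p + (n + 1) from by ring]
  have h1 : ∀ k ∈ range (p + (n + 1)), ((stirling (n + p) k : ℕ) : ZMod p)
      = ((stirling (n + 1) k : ℕ) : ZMod p)
        + (if p ≤ k then ((stirling n (k - p) : ℕ) : ZMod p) else 0) :=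
    fun k _ => stirling_key n k
  rw [sum_congr rfl h1, sum_add_distrib]
  have h2 : ∑ k ∈ range (p + (n + 1)), ((stirling (n + 1) k : ℕ) : ZMod p)
      = ∑ k ∈ range (n + 1 + 1), ((stirling (n + 1) k : ℕ) : ZMod p) := by
    refine (sum_subset (range_subset_range.mpr (by have := hp.pos; omega)) fun x _ hx => ?_).symm
    rw [mem_range, not_lt] at hx
    rw [stirling_eq_zero (show n + 1 < x from by omega)]
    simp
  have h3 : ∑ k ∈ range (p + (n + 1)), (if p ≤ k then ((stirling n (k - p) : ℕ) : ZMod p) else 0)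
      = ∑ k ∈ range (n + 1), ((stirling n k : ℕ) : ZMod p) := by
    rw [sum_range_add]
    have hz : ∑ k ∈ range p, (if p ≤ k then ((stirling n (k - p) : ℕ) : ZMod p) else 0) = 0 := by
      refine sum_eq_zero fun x hx => ?_
      rw [mem_range] at hx
      rw [if_neg (by omega)]
    rw [hz, zero_add]
    refine sum_congr rfl fun i _ => ?_
    rw [if_pos (by omega), Nat.add_sub_cancel_left]
  rw [h2, h3]
  ring
end
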